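/- (Theorem 1, pressure component.) Fix x* > 0, a fixed observation time t > 0, and a sensor location x_m with 0 < x_m ≤ x*. Then the map u ↦ p^u(x_m, min(t, τ*_u)), from the space C([0,x*], ℝ) of continuous real-valued functions on [0,x*] equipped with the supremum metric to ℝ, is continuous. -/

import Mathlib

open Set

noncomputable def Fu (xs : ℝ) (h : 0 ≤ xs) (u : C(Icc (0:ℝ) xs, ℝ)) (x : ℝ) : ℝ :=
  ∫ z in (0:ℝ)..x, Real.exp (-(u (projIcc 0 xs h z)))

noncomputable def Wu (xs : ℝ) (h : 0 ≤ xs) (u : C(Icc (0:ℝ) xs, ℝ)) (x : ℝ) : ℝ :=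
  ∫ ξ in (0:ℝ)..x, Fu xs h u ξ

noncomputable def tau (xs : ℝ) (h : 0 ≤ xs) (u : C(Icc (0:ℝ) xs, ℝ)) : ℝ :=
  Wu xs h u xs

/-- The moving front `Υ^u = W_u⁻¹`: since `W_u` is continuous and strictly increasing
on `[0,x*]`, for `t ∈ [0,τ*_u]` the set below is a singleton and `front` is its element. -/
noncomputable def front (xs : ℝ) (h : 0 ≤ xs) (u : C(Icc (0:ℝ) xs, ℝ)) (t : ℝ) : ℝ :=
  sInf {x : ℝ | x ∈ Icc 0 xs ∧ Wu xs h u x = t}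

/-- Dimensionless pressure: `p^u(x,t) = 2 - F_u(x)/F_u(Υ^u(t))` for `x ≤ Υ^u(t)`,
and `1` ahead of the front. -/
noncomputable def press (xs : ℝ) (h : 0 ≤ xs) (u : C(Icc (0:ℝ) xs, ℝ)) (x t : ℝ) : ℝ :=
  if x ≤ front xs h u t then 2 - Fu xs h u x / Fu xs h u (front xs h u t) else 1

/- ============ auxiliary lemmas ============ -/

lemma contg (xs : ℝ) (h : 0 ≤ xs) (u : C(Icc (0:ℝ) xs, ℝ)) :
    Continuous fun z : ℝ => Real.exp (-(u (projIcc 0 xs h z))) :=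
  Real.continuous_exp.comp (u.continuous.comp continuous_projIcc).neg

lemma g_intble (xs : ℝ) (h : 0 ≤ xs) (u : C(Icc (0:ℝ) xs, ℝ)) (a b : ℝ) :
    IntervalIntegrable (fun z : ℝ => Real.exp (-(u (projIcc 0 xs h z))))
      MeasureTheory.volume a b :=
  (contg xs h u).intervalIntegrable a b

lemma Fu_cont (xs : ℝ) (h : 0 ≤ xs) (u : C(Icc (0:ℝ) xs, ℝ)) :
    Continuous (Fu xs h u) :=
  intervalIntegral.continuous_primitive (g_intble xs h u) 0

lemma Fu_zero (xs : ℝ) (h : 0 ≤ xs) (u : C(Icc (0:ℝ) xs, ℝ)) : Fu xs h u 0 = 0 :=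
  intervalIntegral.integral_same

lemma Fu_lt (xs : ℝ) (h : 0 ≤ xs) (u : C(Icc (0:ℝ) xs, ℝ)) {a b : ℝ} (hab : a < b) :
    Fu xs h u a < Fu xs h u b := by
  have hadd := intervalIntegral.integral_add_adjacent_intervals
    (g_intble xs h u 0 a) (g_intble xs h u a b)
  have hpos : 0 < ∫ z in a..b, Real.exp (-(u (projIcc 0 xs h z))) :=
    intervalIntegral.intervalIntegral_pos_of_pos (g_intble xs h u a b)
      (fun x => Real.exp_pos _) hab
  show Fu xs h u a < Fu xs h u b
  unfold Fu
  linarith [hadd]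

lemma Fu_mono (xs : ℝ) (h : 0 ≤ xs) (u : C(Icc (0:ℝ) xs, ℝ)) {a b : ℝ} (hab : a ≤ b) :
    Fu xs h u a ≤ Fu xs h u b := by
  rcases hab.eq_or_lt with rfl | hlt
  · exact le_refl _
  · exact (Fu_lt xs h u hlt).le

lemma Fu_pos (xs : ℝ) (h : 0 ≤ xs) (u : C(Icc (0:ℝ) xs, ℝ)) {x : ℝ} (hx : 0 < x) :
    0 < Fu xs h u x := by
  have := Fu_lt xs h u hx
  rwa [Fu_zero] at this

lemma Fu_intble (xs : ℝ) (h : 0 ≤ xs) (u : C(Icc (0:ℝ) xs, ℝ)) (a b : ℝ) :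
    IntervalIntegrable (Fu xs h u) MeasureTheory.volume a b :=
  (Fu_cont xs h u).intervalIntegrable a b

lemma Wu_cont (xs : ℝ) (h : 0 ≤ xs) (u : C(Icc (0:ℝ) xs, ℝ)) :
    Continuous (Wu xs h u) :=
  intervalIntegral.continuous_primitive (Fu_intble xs h u) 0

lemma Wu_zero (xs : ℝ) (h : 0 ≤ xs) (u : C(Icc (0:ℝ) xs, ℝ)) : Wu xs h u 0 = 0 :=
  intervalIntegral.integral_same

lemma Wu_lt (xs : ℝ) (h : 0 ≤ xs) (u : C(Icc (0:ℝ) xs, ℝ)) {a b : ℝ}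
    (ha : 0 ≤ a) (hab : a < b) : Wu xs h u a < Wu xs h u b := by
  have hadd := intervalIntegral.integral_add_adjacent_intervals
    (Fu_intble xs h u 0 a) (Fu_intble xs h u a b)
  have hpos : 0 < ∫ ξ in a..b, Fu xs h u ξ :=
    intervalIntegral.intervalIntegral_pos_of_pos_on (Fu_intble xs h u a b)
      (fun x hx => Fu_pos xs h u (ha.trans_lt hx.1)) hab
  show Wu xs h u a < Wu xs h u b
  unfold Wu
  linarith [hadd]

lemma Wu_mono (xs : ℝ) (h : 0 ≤ xs) (u : C(Icc (0:ℝ) xs, ℝ)) {a b : ℝ}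
    (ha : 0 ≤ a) (hab : a ≤ b) : Wu xs h u a ≤ Wu xs h u b := by
  rcases hab.eq_or_lt with rfl | hlt
  · exact le_refl _
  · exact (Wu_lt xs h u ha hlt).le

lemma tau_pos (xs : ℝ) (hxs : 0 < xs) (u : C(Icc (0:ℝ) xs, ℝ)) :
    0 < tau xs hxs.le u := by
  have := Wu_lt xs hxs.le u le_rfl hxs
  rwa [Wu_zero] at this

lemma front_mem (xs : ℝ) (h : 0 ≤ xs) (u : C(Icc (0:ℝ) xs, ℝ)) {s : ℝ}
    (hs0 : 0 ≤ s) (hs : s ≤ tau xs h u) :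
    front xs h u s ∈ Icc (0:ℝ) xs ∧ Wu xs h u (front xs h u s) = s := by
  have hWc := Wu_cont xs h u
  have hne : ({x : ℝ | x ∈ Icc 0 xs ∧ Wu xs h u x = s} : Set ℝ).Nonempty := by
    have hsub := intermediate_value_Icc h (hWc.continuousOn (s := Icc (0:ℝ) xs))
    have hmem : s ∈ Icc (Wu xs h u 0) (Wu xs h u xs) := by
      rw [Wu_zero]; exact ⟨hs0, hs⟩
    obtain ⟨x, hx, hfx⟩ := hsub hmem
    exact ⟨x, hx, hfx⟩
  have hcl : IsClosed {x : ℝ | x ∈ Icc 0 xs ∧ Wu xs h u x = s} :=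
    isClosed_Icc.inter (isClosed_eq hWc continuous_const)
  have hbd : BddBelow {x : ℝ | x ∈ Icc 0 xs ∧ Wu xs h u x = s} :=
    ⟨0, fun x hx => hx.1.1⟩
  exact hcl.csInf_mem hne hbd

lemma Fu_sub_bound (xs : ℝ) (h : 0 ≤ xs) (u v : C(Icc (0:ℝ) xs, ℝ))
    (hd : dist u v ≤ 1) {x : ℝ} (hx : x ∈ Icc (0:ℝ) xs) :
    |Fu xs h u x - Fu xs h v x| ≤ 2 * Real.exp ‖u‖ * dist u v * xs := by
  have hsub : Fu xs h u x - Fu xs h v x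
      = ∫ z in (0:ℝ)..x, (Real.exp (-(u (projIcc 0 xs h z)))
          - Real.exp (-(v (projIcc 0 xs h z)))) := by
    unfold Fu
    rw [intervalIntegral.integral_sub (g_intble xs h u 0 x) (g_intble xs h v 0 x)]
  have hptw : ∀ z : ℝ, ‖Real.exp (-(u (projIcc 0 xs h z)))
      - Real.exp (-(v (projIcc 0 xs h z)))‖ ≤ 2 * Real.exp ‖u‖ * dist u v := by
    intro z
    set p := projIcc 0 xs h z
    have h1 : |u p - v p| ≤ dist u v := by
      have := ContinuousMap.dist_apply_le_dist (f := u) (g := v) p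
      rwa [Real.dist_eq] at this
    have h2 : Real.exp (-(u p)) ≤ Real.exp ‖u‖ := by
      apply Real.exp_le_exp.2
      calc -(u p) ≤ |u p| := neg_le_abs _
        _ ≤ ‖u‖ := by
          have := u.norm_coe_le_norm p
          rwa [Real.norm_eq_abs] at this
    have key : Real.exp (-(u p)) - Real.exp (-(v p))
        = Real.exp (-(u p)) * (1 - Real.exp (u p - v p)) := by
      have e : -(u p) + (u p - v p) = -(v p) := by ring
      rw [mul_sub, mul_one, ← Real.exp_add, e]
    have hw : |Real.exp (u p - v p) - 1| ≤ 2 * |u p - v p| :=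
      Real.abs_exp_sub_one_le (h1.trans hd)
    rw [Real.norm_eq_abs, key, abs_mul, Real.abs_exp]
    have h3 : |1 - Real.exp (u p - v p)| ≤ 2 * dist u v := by
      rw [abs_sub_comm]
      exact hw.trans (by nlinarith [h1])
    calc Real.exp (-(u p)) * |1 - Real.exp (u p - v p)|
        ≤ Real.exp ‖u‖ * (2 * dist u v) := by
          apply mul_le_mul h2 h3 (abs_nonneg _) (Real.exp_pos _).le
      _ = 2 * Real.exp ‖u‖ * dist u v := by ring
  rw [hsub]
  have hC : (0:ℝ) ≤ 2 * Real.exp ‖u‖ * dist u v := by positivity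
  calc |∫ z in (0:ℝ)..x, (Real.exp (-(u (projIcc 0 xs h z)))
          - Real.exp (-(v (projIcc 0 xs h z))))|
      ≤ 2 * Real.exp ‖u‖ * dist u v * |x - 0| :=
        intervalIntegral.norm_integral_le_of_norm_le_const (fun z _ => hptw z)
    _ ≤ 2 * Real.exp ‖u‖ * dist u v * xs := by
        apply mul_le_mul_of_nonneg_left _ hC
        rw [sub_zero, abs_of_nonneg hx.1]
        exact hx.2

lemma Wu_sub_bound (xs : ℝ) (h : 0 ≤ xs) (u v : C(Icc (0:ℝ) xs, ℝ))
    (hd : dist u v ≤ 1) {x : ℝ} (hx : x ∈ Icc (0:ℝ) xs) :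
    |Wu xs h u x - Wu xs h v x| ≤ 2 * Real.exp ‖u‖ * dist u v * xs * xs := by
  have hsub : Wu xs h u x - Wu xs h v x
      = ∫ ξ in (0:ℝ)..x, (Fu xs h u ξ - Fu xs h v ξ) := by
    unfold Wu
    rw [intervalIntegral.integral_sub (Fu_intble xs h u 0 x) (Fu_intble xs h v 0 x)]
  have hptw : ∀ ξ ∈ Set.uIoc (0:ℝ) x, ‖Fu xs h u ξ - Fu xs h v ξ‖
      ≤ 2 * Real.exp ‖u‖ * dist u v * xs := by
    intro ξ hξ
    rw [Set.uIoc_of_le hx.1] at hξ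
    have hξI : ξ ∈ Icc (0:ℝ) xs := ⟨hξ.1.le, hξ.2.trans hx.2⟩
    rw [Real.norm_eq_abs]
    exact Fu_sub_bound xs h u v hd hξI
  rw [hsub]
  have hC : (0:ℝ) ≤ 2 * Real.exp ‖u‖ * dist u v * xs := by positivity
  calc |∫ ξ in (0:ℝ)..x, (Fu xs h u ξ - Fu xs h v ξ)|
      ≤ 2 * Real.exp ‖u‖ * dist u v * xs * |x - 0| :=
        intervalIntegral.norm_integral_le_of_norm_le_const hptw
    _ ≤ 2 * Real.exp ‖u‖ * dist u v * xs * xs := by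
        apply mul_le_mul_of_nonneg_left _ hC
        rw [sub_zero, abs_of_nonneg hx.1]
        exact hx.2

/-- Theorem 1, pressure component: for a fixed observation time `t > 0`
and sensor location `0 < x_m ≤ x*`, the map `u ↦ p^u(x_m, min(t, τ*_u))` is continuous
on `C([0,x*], ℝ)` with the sup metric. -/
theorem stmt_16 (xs : ℝ) (hxs : 0 < xs) (t : ℝ) (ht : 0 < t)
    (xm : ℝ) (hxm0 : 0 < xm) (hxm : xm ≤ xs) :
    Continuous fun u : C(Icc (0:ℝ) xs, ℝ) =>
      press xs hxs.le u xm (min t (tau xs hxs.le u)) := by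
  have h : (0:ℝ) ≤ xs := hxs.le
  set s : C(Icc (0:ℝ) xs, ℝ) → ℝ := fun u => min t (tau xs h u) with hs_def
  set Y : C(Icc (0:ℝ) xs, ℝ) → ℝ := fun u => front xs h u (s u) with hY_def
  have hs_pos : ∀ u, 0 < s u := fun u => lt_min ht (tau_pos xs hxs u)
  have hs_le : ∀ u, s u ≤ tau xs h u := fun u => min_le_right _ _
  have hYspec : ∀ u, Y u ∈ Icc (0:ℝ) xs ∧ Wu xs h u (Y u) = s u :=
    fun u => front_mem xs h u (hs_pos u).le (hs_le u)
  have hYpos : ∀ u, 0 < Y u := by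
    intro u
    rcases (hYspec u).1.1.eq_or_lt with heq | hlt
    · exfalso
      have := (hYspec u).2
      rw [← heq, Wu_zero] at this
      exact absurd this.symm (ne_of_gt (hs_pos u))
    · exact hlt
  -- rewrite press as a max
  have press_eq : ∀ u, press xs h u xm (s u)
      = max 1 (2 - Fu xs h u xm / Fu xs h u (Y u)) := by
    intro u
    have hFY : 0 < Fu xs h u (Y u) := Fu_pos xs h u (hYpos u)
    unfold press
    by_cases hc : xm ≤ Y u
    · rw [if_pos hc]
      have hle : Fu xs h u xm ≤ Fu xs h u (Y u) := Fu_mono xs h u hc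
      have : Fu xs h u xm / Fu xs h u (Y u) ≤ 1 := (div_le_one hFY).2 hle
      exact (max_eq_right (by linarith)).symm
    · rw [if_neg hc]
      push_neg at hc
      have hlt : Fu xs h u (Y u) < Fu xs h u xm := Fu_lt xs h u hc
      have : 1 < Fu xs h u xm / Fu xs h u (Y u) := (one_lt_div hFY).2 hlt
      exact (max_eq_left (by linarith)).symm
  have hfun : (fun u : C(Icc (0:ℝ) xs, ℝ) => press xs hxs.le u xm (min t (tau xs hxs.le u)))
      = fun u => max 1 (2 - Fu xs h u xm / Fu xs h u (Y u)) := funext press_eq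
  rw [hfun, continuous_iff_continuousAt]
  intro u₀
  -- distance tendsto 0
  have hd0 : Filter.Tendsto (fun u : C(Icc (0:ℝ) xs, ℝ) => dist u u₀) (nhds u₀) (nhds 0) :=
    tendsto_iff_dist_tendsto_zero.mp Filter.tendsto_id
  have hE1 : ∀ᶠ u : C(Icc (0:ℝ) xs, ℝ) in nhds u₀, dist u u₀ ≤ 1 :=
    (hd0.eventually (gt_mem_nhds one_pos)).mono fun u hu => hu.le
  -- the uniform bounds
  set cF : C(Icc (0:ℝ) xs, ℝ) → ℝ := fun u => 2 * Real.exp ‖u₀‖ * dist u₀ u * xs with hcF_def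
  set cW : C(Icc (0:ℝ) xs, ℝ) → ℝ := fun u => 2 * Real.exp ‖u₀‖ * dist u₀ u * xs * xs
    with hcW_def
  have hcF0 : Filter.Tendsto cF (nhds u₀) (nhds 0) := by
    have h1 := (hd0.const_mul (2 * Real.exp ‖u₀‖)).mul_const xs
    simp only [hcF_def]
    simpa [dist_comm] using h1
  have hcW0 : Filter.Tendsto cW (nhds u₀) (nhds 0) := by
    have h1 := ((hd0.const_mul (2 * Real.exp ‖u₀‖)).mul_const xs).mul_const xs
    simp only [hcW_def]
    simpa [dist_comm] using h1
  -- tau is continuous at u₀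
  have htauT : Filter.Tendsto (fun u => tau xs h u) (nhds u₀) (nhds (tau xs h u₀)) := by
    rw [tendsto_iff_dist_tendsto_zero]
    apply squeeze_zero' (Filter.Eventually.of_forall fun u => dist_nonneg)
      (hE1.mono ?_) hcW0
    intro u hu
    have := Wu_sub_bound xs h u₀ u (by rwa [dist_comm]) (x := xs) ⟨h, le_rfl⟩
    rw [Real.dist_eq, abs_sub_comm]
    exact this
  have hsT : Filter.Tendsto s (nhds u₀) (nhds (s u₀)) :=
    Filter.Tendsto.min tendsto_const_nhds htauT
  -- the front position is continuous at u₀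
  have hYT : Filter.Tendsto Y (nhds u₀) (nhds (Y u₀)) := by
    rw [Metric.tendsto_nhds]
    intro ε hε
    have hY0pos := hYpos u₀
    have hY0mem := (hYspec u₀).1
    have hW0Y0 := (hYspec u₀).2
    -- lower bound
    have hlow : ∀ᶠ u : C(Icc (0:ℝ) xs, ℝ) in nhds u₀, Y u₀ - ε < Y u := by
      set a : ℝ := max (Y u₀ - ε) (Y u₀ / 2) with ha_def
      have ha0 : 0 ≤ a := le_trans (by linarith) (le_max_right _ _)
      have haY : a < Y u₀ := max_lt (by linarith) (by linarith)
      have haxs : a ∈ Icc (0:ℝ) xs := ⟨ha0, haY.le.trans hY0mem.2⟩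
      have hWa : Wu xs h u₀ a < s u₀ := by
        have := Wu_lt xs h u₀ ha0 haY
        rwa [hW0Y0] at this
      set δ : ℝ := (s u₀ - Wu xs h u₀ a) / 2 with hδ_def
      have hδpos : 0 < δ := by simp only [hδ_def]; linarith
      have hE2 : ∀ᶠ u : C(Icc (0:ℝ) xs, ℝ) in nhds u₀, cW u < δ :=
        hcW0.eventually (gt_mem_nhds hδpos)
      have hE3 : ∀ᶠ u : C(Icc (0:ℝ) xs, ℝ) in nhds u₀, |s u - s u₀| < δ := by
        have := (Metric.tendsto_nhds.mp hsT) δ hδpos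
        simpa [Real.dist_eq] using this
      filter_upwards [hE1, hE2, hE3] with u h1 h2 h3
      by_contra hcon
      push_neg at hcon
      have hYa : Y u ≤ a := le_trans hcon (le_max_left _ _)
      have hm : Wu xs h u (Y u) ≤ Wu xs h u a := Wu_mono xs h u (hYspec u).1.1 hYa
      rw [(hYspec u).2] at hm
      have hb : |Wu xs h u₀ a - Wu xs h u a| ≤ cW u :=
        Wu_sub_bound xs h u₀ u (by rwa [dist_comm]) haxs
      have h1' := abs_lt.mp h3
      have h2' := abs_le.mp hb
      simp only [hδ_def] at h1' h2' h2 ⊢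
      linarith
    -- upper bound
    have hup : ∀ᶠ u : C(Icc (0:ℝ) xs, ℝ) in nhds u₀, Y u < Y u₀ + ε := by
      by_cases hb : Y u₀ + ε ≤ xs
      · set b : ℝ := Y u₀ + ε with hb_def
        have hY0lt : Y u₀ < b := by simp only [hb_def]; linarith
        have hblexs : b ≤ xs := hb
        have hs0t : s u₀ = t := by
          have hlt : s u₀ < tau xs h u₀ := by
            have := Wu_lt xs h u₀ hY0mem.1 (lt_of_lt_of_le hY0lt hblexs)
            rw [hW0Y0] at this
            exact this
          rcases le_total t (tau xs h u₀) with hc | hc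
          · exact min_eq_left hc
          · exfalso
            rw [hs_def] at hlt
            simp only [min_eq_right hc] at hlt
            exact lt_irrefl _ hlt
        have hWb : s u₀ < Wu xs h u₀ b := by
          have := Wu_lt xs h u₀ hY0mem.1 hY0lt
          rwa [hW0Y0] at this
        set δ : ℝ := (Wu xs h u₀ b - s u₀) / 2 with hδ_def
        have hδpos : 0 < δ := by simp only [hδ_def]; linarith
        have hE2 : ∀ᶠ u : C(Icc (0:ℝ) xs, ℝ) in nhds u₀, cW u < δ :=
          hcW0.eventually (gt_mem_nhds hδpos)
        filter_upwards [hE1, hE2] with u h1 h2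
        by_contra hcon
        push_neg at hcon
        have hm : Wu xs h u b ≤ Wu xs h u (Y u) :=
          Wu_mono xs h u (le_trans hY0mem.1 hY0lt.le) hcon
        rw [(hYspec u).2] at hm
        have hsu_le : s u ≤ t := min_le_left _ _
        have hbnd : |Wu xs h u₀ b - Wu xs h u b| ≤ cW u :=
          Wu_sub_bound xs h u₀ u (by rwa [dist_comm]) ⟨le_trans hY0mem.1 hY0lt.le, hblexs⟩
        have h2' := abs_le.mp hbnd
        simp only [hδ_def] at h2' h2
        rw [hs0t] at hWb
        linarith
      · push_neg at hb
        exact Filter.Eventually.of_forall fun u => lt_of_le_of_lt (hYspec u).1.2 hb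
    filter_upwards [hlow, hup] with u h1 h2
    rw [Real.dist_eq, abs_sub_lt_iff]
    constructor <;> linarith
  -- continuity of Fu at the sensor and at the front
  have hAT : Filter.Tendsto (fun u => Fu xs h u xm) (nhds u₀) (nhds (Fu xs h u₀ xm)) := by
    rw [tendsto_iff_dist_tendsto_zero]
    apply squeeze_zero' (Filter.Eventually.of_forall fun u => dist_nonneg)
      (hE1.mono ?_) hcF0
    intro u hu
    have := Fu_sub_bound xs h u₀ u (by rwa [dist_comm]) (x := xm) ⟨hxm0.le, hxm⟩
    rw [Real.dist_eq, abs_sub_comm]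
    exact this
  have hcomp : Filter.Tendsto (fun u => Fu xs h u₀ (Y u)) (nhds u₀)
      (nhds (Fu xs h u₀ (Y u₀))) :=
    ((Fu_cont xs h u₀).tendsto (Y u₀)).comp hYT
  have hBT : Filter.Tendsto (fun u => Fu xs h u (Y u)) (nhds u₀)
      (nhds (Fu xs h u₀ (Y u₀))) := by
    rw [tendsto_iff_dist_tendsto_zero]
    have hsum : Filter.Tendsto
        (fun u => cF u + dist (Fu xs h u₀ (Y u)) (Fu xs h u₀ (Y u₀)))
        (nhds u₀) (nhds 0) := by
      have := hcF0.add (tendsto_iff_dist_tendsto_zero.mp hcomp)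
      simpa using this
    apply squeeze_zero' (Filter.Eventually.of_forall fun u => dist_nonneg)
      (hE1.mono ?_) hsum
    intro u hu
    calc dist (Fu xs h u (Y u)) (Fu xs h u₀ (Y u₀))
        ≤ dist (Fu xs h u (Y u)) (Fu xs h u₀ (Y u)) +
            dist (Fu xs h u₀ (Y u)) (Fu xs h u₀ (Y u₀)) := dist_triangle _ _ _
      _ ≤ cF u + dist (Fu xs h u₀ (Y u)) (Fu xs h u₀ (Y u₀)) := by
          refine add_le_add ?_ le_rfl
          rw [Real.dist_eq, abs_sub_comm]
          exact Fu_sub_bound xs h u₀ u (by rwa [dist_comm]) (hYspec u).1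
  have hB0 : Fu xs h u₀ (Y u₀) ≠ 0 := (Fu_pos xs h u₀ (hYpos u₀)).ne'
  exact continuousAt_const.max
    (continuousAt_const.sub (ContinuousAt.div hAT hBT hB0))
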